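/- Fix $\beta \in [1,2]$. There exists a constant $C(\beta) > 0$ such that for all $n$ and all independent real random variables $X_1,\ldots,X_n$ with $\mathbb{E}[X_i] = 0$ and $\mathbb{E}[|X_i|^\beta] < \infty$, we have $\mathbb{E}\big[\big|\sum_{i=1}^n X_i\big|^\beta\big] \le C(\beta) \sum_{i=1}^n \mathbb{E}[|X_i|^\beta]$. -/

import Mathlib

open MeasureTheory ProbabilityTheory

lemma vbe_rpow_subadd {p : ℝ} (hp0 : 0 ≤ p) (hp1 : p ≤ 1) {x y : ℝ} (hx : 0 ≤ x) (hy : 0 ≤ y) :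
    (x + y) ^ p ≤ x ^ p + y ^ p := by
  have h := NNReal.rpow_add_le_add_rpow x.toNNReal y.toNNReal hp0 hp1
  have h2 := NNReal.coe_le_coe.2 h
  rwa [NNReal.coe_add, NNReal.coe_rpow, NNReal.coe_rpow, NNReal.coe_rpow, NNReal.coe_add,
    Real.coe_toNNReal x hx, Real.coe_toNNReal y hy] at h2

lemma vbe_one_add (β : ℝ) (hβ1 : 1 ≤ β) (hβ2 : β ≤ 2) {t : ℝ} (ht : 0 ≤ t) :
    (1 + t) ^ β ≤ 1 + β * t + t ^ β := by
  have hβ0 : (0:ℝ) < β := lt_of_lt_of_le one_pos hβ1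
  set f : ℝ → ℝ := fun t => 1 + β * t + t ^ β - (1 + t) ^ β with hf
  have hder : ∀ x ∈ interior (Set.Ici (0:ℝ)), HasDerivAt f
      (β + β * x ^ (β - 1) - β * (1 + x) ^ (β - 1)) x := by
    intro x hx
    rw [interior_Ici] at hx
    have hx0 : (0:ℝ) < x := hx
    have h1 : HasDerivAt (fun t : ℝ => t ^ β) (β * x ^ (β - 1)) x :=
      Real.hasDerivAt_rpow_const (Or.inl hx0.ne')
    have h2 : HasDerivAt (fun t : ℝ => (1 + t) ^ β) (β * (1 + x) ^ (β - 1)) x := by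
      have hb : HasDerivAt (fun t : ℝ => 1 + t) 1 x := (hasDerivAt_id x).const_add 1
      have := (Real.hasDerivAt_rpow_const (x := 1 + x) (p := β)
        (Or.inl (by positivity))).comp x hb
      exact this.congr_deriv (mul_one _)
    have h3 : HasDerivAt (fun t : ℝ => 1 + β * t) β x := by
      simpa using ((hasDerivAt_id x).const_mul β).const_add 1
    exact (h3.add h1).sub h2
  have hcont : ContinuousOn f (Set.Ici 0) := by
    apply Continuous.continuousOn
    apply Continuous.sub
    · exact (continuous_const.add (continuous_const.mul continuous_id)).add
        (continuous_id.rpow_const (fun x => Or.inr hβ0.le))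
    · exact (continuous_const.add continuous_id).rpow_const (fun x => Or.inr hβ0.le)
  have hmono : MonotoneOn f (Set.Ici 0) := by
    apply monotoneOn_of_deriv_nonneg (convex_Ici 0) hcont
    · intro x hx
      exact (hder x hx).differentiableAt.differentiableWithinAt
    · intro x hx
      rw [(hder x hx).deriv]
      rw [interior_Ici] at hx
      have hsub : (1 + x) ^ (β - 1) ≤ 1 ^ (β - 1) + x ^ (β - 1) :=
        vbe_rpow_subadd (by linarith) (by linarith) zero_le_one hx.le
      rw [Real.one_rpow] at hsub
      nlinarith [Real.rpow_nonneg hx.le (β - 1)]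
  have h0 : f 0 ≤ f t := hmono Set.self_mem_Ici ht ht
  have hf0 : f 0 = 0 := by
    simp [hf, Real.zero_rpow hβ0.ne', Real.one_rpow]
  rw [hf0] at h0
  simp only [hf] at h0
  linarith

lemma vbe_one_sub (β : ℝ) (hβ1 : 1 ≤ β) (hβ2 : β ≤ 2) {s : ℝ} (hs0 : 0 ≤ s) (hs1 : s ≤ 1) :
    (1 - s) ^ β ≤ 1 - β * s + 2 * s ^ β := by
  have hβ0 : (0:ℝ) < β := lt_of_lt_of_le one_pos hβ1
  set g : ℝ → ℝ := fun s => 1 - β * s + 2 * s ^ β - (1 - s) ^ β with hg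
  have hder : ∀ x ∈ interior (Set.Icc (0:ℝ) 1), HasDerivAt g
      (-β + 2 * (β * x ^ (β - 1)) + β * (1 - x) ^ (β - 1)) x := by
    intro x hx
    rw [interior_Icc] at hx
    obtain ⟨hx0, hx1⟩ := hx
    have h1 : HasDerivAt (fun t : ℝ => t ^ β) (β * x ^ (β - 1)) x :=
      Real.hasDerivAt_rpow_const (Or.inl hx0.ne')
    have h2 : HasDerivAt (fun t : ℝ => (1 - t) ^ β) (β * (1 - x) ^ (β - 1) * (-1)) x := by
      have hb : HasDerivAt (fun t : ℝ => 1 - t) (-1) x := by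
        simpa using (hasDerivAt_id x).const_sub 1
      exact (Real.hasDerivAt_rpow_const (x := 1 - x) (p := β)
        (Or.inl (by linarith))).comp x hb
    have h3 : HasDerivAt (fun t : ℝ => 1 - β * t) (-β) x := by
      simpa using ((hasDerivAt_id x).const_mul β).const_sub 1
    have := (h3.add (h1.const_mul 2)).sub h2
    exact this.congr_deriv (by ring)
  have hcont : ContinuousOn g (Set.Icc 0 1) := by
    apply Continuous.continuousOn
    apply Continuous.sub
    · exact ((continuous_const.sub (continuous_const.mul continuous_id)).add
        (continuous_const.mul (continuous_id.rpow_const (fun x => Or.inr hβ0.le))))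
    · exact (continuous_const.sub continuous_id).rpow_const (fun x => Or.inr hβ0.le)
  have hmono : MonotoneOn g (Set.Icc 0 1) := by
    apply monotoneOn_of_deriv_nonneg (convex_Icc 0 1) hcont
    · intro x hx
      exact (hder x hx).differentiableAt.differentiableWithinAt
    · intro x hx
      rw [(hder x hx).deriv]
      rw [interior_Icc] at hx
      obtain ⟨hx0, hx1⟩ := hx
      have e1 : x ^ (1:ℝ) ≤ x ^ (β - 1) :=
        Real.rpow_le_rpow_of_exponent_ge hx0 hx1.le (by linarith)
      have e2 : (1 - x) ^ (1:ℝ) ≤ (1 - x) ^ (β - 1) :=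
        Real.rpow_le_rpow_of_exponent_ge (by linarith) (by linarith) (by linarith)
      rw [Real.rpow_one] at e1 e2
      nlinarith
  have h0 : g 0 ≤ g s := hmono (Set.left_mem_Icc.2 zero_le_one) ⟨hs0, hs1⟩ hs0
  have hg0 : g 0 = 0 := by
    simp [hg, Real.zero_rpow hβ0.ne', Real.one_rpow]
  rw [hg0] at h0
  simp only [hg] at h0
  linarith

lemma vbe_scaled (β : ℝ) (hβ1 : 1 ≤ β) (hβ2 : β ≤ 2) {a b : ℝ} (ha : 0 < a) (hb : |b| ≤ a) :
    |a + b| ^ β ≤ a ^ β + β * a ^ (β - 1) * b + 2 * |b| ^ β := by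
  have hβ0 : (0:ℝ) < β := lt_of_lt_of_le one_pos hβ1
  have hab : 0 ≤ a + b := by
    rcases abs_le.1 hb with ⟨h1, _⟩; linarith
  rw [abs_of_nonneg hab]
  have hpow : a ^ β = a ^ (β - 1) * a := by
    rw [← Real.rpow_add_one ha.ne' (β - 1)]; ring_nf
  rcases le_or_gt 0 b with hb0 | hb0
  · -- b ≥ 0
    have ht := vbe_one_add β hβ1 hβ2 (t := b / a) (by positivity)
    have hmul := mul_le_mul_of_nonneg_left ht (Real.rpow_nonneg ha.le β)
    have e1 : a ^ β * (1 + b / a) ^ β = (a + b) ^ β := by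
      rw [← Real.mul_rpow ha.le (by positivity)]
      congr 1; field_simp
    have e2 : a ^ β * (b / a) ^ β = b ^ β := by
      rw [← Real.mul_rpow ha.le (by positivity)]
      congr 1; field_simp
    have hkey : a ^ β * (b / a) = a ^ (β - 1) * b := by
      rw [hpow]; field_simp
    have expand : a ^ β * (1 + β * (b / a) + (b / a) ^ β)
        = a ^ β + β * (a ^ β * (b / a)) + a ^ β * (b / a) ^ β := by ring
    rw [expand, hkey, e2, e1] at hmul
    rw [abs_of_nonneg hb0]
    nlinarith [Real.rpow_nonneg hb0 β]
  · -- b < 0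
    have hs0 : 0 ≤ -b / a := div_nonneg (by linarith) ha.le
    have hs1 : -b / a ≤ 1 := by
      rw [div_le_one ha]
      rw [abs_of_neg hb0] at hb; linarith
    have ht := vbe_one_sub β hβ1 hβ2 hs0 hs1
    have hmul := mul_le_mul_of_nonneg_left ht (Real.rpow_nonneg ha.le β)
    have e1 : a ^ β * (1 - -b / a) ^ β = (a + b) ^ β := by
      rw [← Real.mul_rpow ha.le (by linarith)]
      congr 1; field_simp; ring
    have e2 : a ^ β * (-b / a) ^ β = (-b) ^ β := by
      rw [← Real.mul_rpow ha.le hs0]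
      congr 1; field_simp
    have hkey2 : a ^ β * (-b / a) = a ^ (β - 1) * -b := by
      rw [hpow]; field_simp
    have expand : a ^ β * (1 - β * (-b / a) + 2 * (-b / a) ^ β)
        = a ^ β - β * (a ^ β * (-b / a)) + 2 * (a ^ β * (-b / a) ^ β) := by ring
    rw [expand, hkey2, e2, e1] at hmul
    rw [abs_of_neg hb0]
    calc (a + b) ^ β ≤ a ^ β - β * (a ^ (β - 1) * -b) + 2 * (-b) ^ β := hmul
      _ = a ^ β + β * a ^ (β - 1) * b + 2 * (-b) ^ β := by ring

lemma vbe_pointwise (β : ℝ) (hβ1 : 1 ≤ β) (hβ2 : β ≤ 2) (a b : ℝ) :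
    |a + b| ^ β ≤ |a| ^ β + β * |a| ^ (β - 1) * Real.sign a * b + 6 * |b| ^ β := by
  have hβ0 : (0:ℝ) < β := lt_of_lt_of_le one_pos hβ1
  rcases le_or_gt (|b|) (|a|) with hba | hba
  · rcases lt_trichotomy a 0 with ha | ha | ha
    · -- a < 0
      have h := vbe_scaled β hβ1 hβ2 (a := -a) (b := -b)
        (by linarith) (by rwa [abs_neg, abs_of_neg ha] at *)
      rw [show -a + -b = -(a + b) by ring, abs_neg, abs_neg] at h
      rw [abs_of_neg ha, Real.sign_of_neg ha]
      calc |a + b| ^ β ≤ (-a) ^ β + β * (-a) ^ (β - 1) * -b + 2 * |b| ^ β := h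
        _ = (-a) ^ β + β * (-a) ^ (β - 1) * (-1) * b + 2 * |b| ^ β := by ring
        _ ≤ (-a) ^ β + β * (-a) ^ (β - 1) * (-1) * b + 6 * |b| ^ β := by
            nlinarith [Real.rpow_nonneg (abs_nonneg b) β]
    · -- a = 0
      subst ha
      have hb : b = 0 := by
        simpa using le_antisymm (by simpa using hba) (abs_nonneg b)
      subst hb
      simp [Real.zero_rpow hβ0.ne']
    · -- a > 0
      have h := vbe_scaled β hβ1 hβ2 ha (by rwa [abs_of_pos ha] at hba)
      rw [abs_of_pos ha, Real.sign_of_pos ha]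
      calc |a + b| ^ β ≤ a ^ β + β * a ^ (β - 1) * b + 2 * |b| ^ β := h
        _ = a ^ β + β * a ^ (β - 1) * 1 * b + 2 * |b| ^ β := by ring
        _ ≤ a ^ β + β * a ^ (β - 1) * 1 * b + 6 * |b| ^ β := by
            nlinarith [Real.rpow_nonneg (abs_nonneg b) β]
  · -- |a| < |b|
    have hb0 : 0 < |b| := lt_of_le_of_lt (abs_nonneg a) hba
    have h1 : |a + b| ^ β ≤ (2 * |b|) ^ β := by
      apply Real.rpow_le_rpow (abs_nonneg _) _ hβ0.le
      calc |a + b| ≤ |a| + |b| := abs_add_le a b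
        _ ≤ 2 * |b| := by linarith
    have h2 : (2 * |b|) ^ β = 2 ^ β * |b| ^ β := Real.mul_rpow (by norm_num) (abs_nonneg b)
    have h3 : (2:ℝ) ^ β ≤ 4 := by
      have := Real.rpow_le_rpow_of_exponent_le (x := 2) (by norm_num) hβ2
      rwa [show (2:ℝ) ^ (2:ℝ) = 4 by
        rw [show (2:ℝ) = ((2:ℕ):ℝ) by norm_num, Real.rpow_natCast]; norm_num] at this
    have hsb : -|b| ≤ Real.sign a * b := by
      have h := neg_abs_le (Real.sign a * b)
      have h2 : |Real.sign a * b| ≤ |b| := by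
        rw [abs_mul]
        rcases Real.sign_apply_eq a with h | h | h <;> rw [h] <;> simp [abs_nonneg]
      linarith
    have hexp : |a| ^ (β - 1) ≤ |b| ^ (β - 1) :=
      Real.rpow_le_rpow (abs_nonneg a) hba.le (by linarith)
    have hpow : |b| ^ (β - 1) * |b| = |b| ^ β := by
      rw [← Real.rpow_add_one hb0.ne' (β - 1)]; ring_nf
    have hx0 : 0 ≤ |a| ^ (β - 1) := Real.rpow_nonneg (abs_nonneg a) _
    have hbβ : 0 ≤ |b| ^ β := Real.rpow_nonneg (abs_nonneg b) β
    have hmid : -(2 * |b| ^ β) ≤ β * |a| ^ (β - 1) * Real.sign a * b := by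
      nlinarith [mul_nonneg (mul_nonneg hβ0.le hx0) (by linarith : (0:ℝ) ≤ Real.sign a * b + |b|),
        mul_le_mul_of_nonneg_right hexp (abs_nonneg b),
        mul_le_mul_of_nonneg_left (mul_le_mul_of_nonneg_right hexp (abs_nonneg b)) hβ0.le,
        mul_nonneg (by linarith : (0:ℝ) ≤ 2 - β) hbβ]
    have hfin := mul_le_mul_of_nonneg_right h3 hbβ
    nlinarith [Real.rpow_nonneg (abs_nonneg a) β]

lemma vbe_sign_measurable : Measurable Real.sign := by
  have h : Real.sign = fun r : ℝ => if r < 0 then (-1:ℝ) else if 0 < r then 1 else 0 := by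
    funext r; rfl
  rw [h]
  exact Measurable.ite (measurableSet_lt measurable_id measurable_const) measurable_const
    (Measurable.ite (measurableSet_lt measurable_const measurable_id) measurable_const
      measurable_const)

noncomputable def vbeG (β : ℝ) (x : ℝ) : ℝ := β * |x| ^ (β - 1) * Real.sign x

lemma vbeG_measurable (β : ℝ) (hβ1 : 1 ≤ β) : Measurable (vbeG β) :=
  (measurable_const.mul ((Real.continuous_rpow_const (by linarith)).measurable.comp
    measurable_abs)).mul vbe_sign_measurable

lemma vbeG_bound (β : ℝ) (hβ1 : 1 ≤ β) (x : ℝ) : |vbeG β x| ≤ β * (1 + |x| ^ β) := by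
  have hβ0 : (0:ℝ) < β := lt_of_lt_of_le one_pos hβ1
  have hx : 0 ≤ |x| ^ (β - 1) := Real.rpow_nonneg (abs_nonneg x) _
  have hs : |Real.sign x| ≤ 1 := by
    rcases Real.sign_apply_eq x with h | h | h <;> rw [h] <;> norm_num
  have h1 : |vbeG β x| ≤ β * |x| ^ (β - 1) := by
    rw [vbeG, abs_mul, abs_mul, abs_of_pos hβ0, abs_of_nonneg hx]
    nlinarith [mul_nonneg hβ0.le hx, mul_le_mul_of_nonneg_left hs (mul_nonneg hβ0.le hx)]
  have h2 : |x| ^ (β - 1) ≤ 1 + |x| ^ β := by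
    rcases le_or_gt (|x|) 1 with hx1 | hx1
    · have := Real.rpow_le_one (abs_nonneg x) hx1 (by linarith : (0:ℝ) ≤ β - 1)
      nlinarith [Real.rpow_nonneg (abs_nonneg x) β]
    · have := Real.rpow_le_rpow_of_exponent_le hx1.le (by linarith : β - 1 ≤ β)
      linarith
  nlinarith

lemma vbe_dom (β : ℝ) (hβ1 : 1 ≤ β) (hβ2 : β ≤ 2) (x y : ℝ) :
    |x + y| ^ β ≤ 4 * (|x| ^ β + |y| ^ β) := by
  have hβ0 : (0:ℝ) < β := lt_of_lt_of_le one_pos hβ1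
  have h4 : ∀ u v : ℝ, |u| ≤ |v| → |u + v| ^ β ≤ 4 * (|u| ^ β + |v| ^ β) := by
    intro u v huv
    have h1 : |u + v| ^ β ≤ (2 * |v|) ^ β := by
      apply Real.rpow_le_rpow (abs_nonneg _) _ hβ0.le
      calc |u + v| ≤ |u| + |v| := abs_add_le u v
        _ ≤ 2 * |v| := by linarith
    have h2 : (2 * |v|) ^ β = 2 ^ β * |v| ^ β := Real.mul_rpow (by norm_num) (abs_nonneg v)
    have h3 : (2:ℝ) ^ β ≤ 4 := by
      have := Real.rpow_le_rpow_of_exponent_le (x := 2) (by norm_num) hβ2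
      rwa [show (2:ℝ) ^ (2:ℝ) = 4 by
        rw [show (2:ℝ) = ((2:ℕ):ℝ) by norm_num, Real.rpow_natCast]; norm_num] at this
    have hv : 0 ≤ |v| ^ β := Real.rpow_nonneg (abs_nonneg v) β
    have hu : 0 ≤ |u| ^ β := Real.rpow_nonneg (abs_nonneg u) β
    nlinarith [mul_le_mul_of_nonneg_right h3 hv]
  rcases le_or_gt (|x|) (|y|) with h | h
  · exact h4 x y h
  · have := h4 y x h.le
    rw [add_comm y x] at this
    linarith

lemma vbe_int_add {Ω : Type} [MeasurableSpace Ω] {μ : Measure Ω} [IsProbabilityMeasure μ]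
    (β : ℝ) (hβ1 : 1 ≤ β) (hβ2 : β ≤ 2) {f g : Ω → ℝ}
    (hfm : Measurable f) (hgm : Measurable g)
    (hf : Integrable (fun ω => |f ω| ^ β) μ) (hg : Integrable (fun ω => |g ω| ^ β) μ) :
    Integrable (fun ω => |f ω + g ω| ^ β) μ := by
  have hβ0 : (0:ℝ) < β := lt_of_lt_of_le one_pos hβ1
  apply Integrable.mono' ((hf.add hg).const_mul 4)
  · exact ((Real.continuous_rpow_const hβ0.le).measurable.comp
      (hfm.add hgm).abs).aestronglyMeasurable
  · filter_upwards with ω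
    rw [Real.norm_eq_abs, abs_of_nonneg (Real.rpow_nonneg (abs_nonneg _) _)]
    exact vbe_dom β hβ1 hβ2 (f ω) (g ω)

/-- The von Bahr–Esseen inequality. -/
theorem stmt_10 (β : ℝ) (hβ : β ∈ Set.Icc (1 : ℝ) 2) :
    ∃ C : ℝ, 0 < C ∧
      ∀ (Ω : Type) (_ : MeasurableSpace Ω) (μ : Measure Ω) (_ : IsProbabilityMeasure μ)
        (n : ℕ) (X : Fin n → Ω → ℝ),
        iIndepFun X μ →
        (∀ i, Measurable (X i)) →
        (∀ i, Integrable (X i) μ) →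
        (∀ i, ∫ ω, X i ω ∂μ = 0) →
        (∀ i, Integrable (fun ω => |X i ω| ^ β) μ) →
        (∫ ω, |∑ i, X i ω| ^ β ∂μ) ≤ C * ∑ i, ∫ ω, |X i ω| ^ β ∂μ := by
  obtain ⟨hβ1, hβ2⟩ := hβ
  have hβ0 : (0:ℝ) < β := lt_of_lt_of_le one_pos hβ1
  refine ⟨6, by norm_num, ?_⟩
  intro Ω mΩ μ hμ n X hindep hmeas hint hmean hintβ
  classical
  -- measurability of partial sums
  have hSm : ∀ s : Finset (Fin n), Measurable (∑ j ∈ s, X j) := by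
    intro s
    have h : (∑ j ∈ s, X j) = fun a => ∑ j ∈ s, X j a := by funext a; simp
    rw [h]
    exact Finset.measurable_sum s (fun j _ => hmeas j)
  -- integrability of |partial sum|^β
  have hSint : ∀ s : Finset (Fin n), Integrable (fun ω => |(∑ j ∈ s, X j) ω| ^ β) μ := by
    intro s
    induction s using Finset.induction_on with
    | empty =>
        simp only [Finset.sum_empty, Pi.zero_apply, abs_zero, Real.zero_rpow hβ0.ne']
        exact integrable_const 0
    | insert i s hi ih =>
        simp only [Finset.sum_insert hi, Pi.add_apply]
        exact vbe_int_add β hβ1 hβ2 (hmeas i) (hSm s) (hintβ i) ih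
  -- main claim by induction on finsets
  have main : ∀ s : Finset (Fin n),
      (∫ ω, |(∑ j ∈ s, X j) ω| ^ β ∂μ) ≤ 6 * ∑ j ∈ s, ∫ ω, |X j ω| ^ β ∂μ := by
    intro s
    induction s using Finset.induction_on with
    | empty =>
        simp [Real.zero_rpow hβ0.ne']
    | insert i s hi ih =>
        set S : Ω → ℝ := ∑ j ∈ s, X j with hS
        have hIndep : IndepFun S (X i) μ :=
          hindep.indepFun_finsetSum_of_notMem hmeas hi
        have hGm : Measurable (fun ω => vbeG β (S ω)) :=
          (vbeG_measurable β hβ1).comp (hSm s)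
        have hGint : Integrable (fun ω => vbeG β (S ω)) μ := by
          apply Integrable.mono' (((integrable_const (1:ℝ)).add (hSint s)).const_mul β)
          · exact hGm.aestronglyMeasurable
          · filter_upwards with ω
            rw [Real.norm_eq_abs]
            exact vbeG_bound β hβ1 (S ω)
        have hGindep : IndepFun (fun ω => vbeG β (S ω)) (X i) μ := by
          have := hIndep.comp (vbeG_measurable β hβ1) measurable_id
          exact this
        have hmul_int : Integrable (fun ω => vbeG β (S ω) * X i ω) μ := by
          have := hGindep.integrable_mul hGint (hint i)
          exact this
        have hzero : (∫ ω, vbeG β (S ω) * X i ω ∂μ) = 0 := by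
          have := hGindep.integral_mul_eq_mul_integral hGint.aestronglyMeasurable (hint i).aestronglyMeasurable
          rw [show (∫ ω, vbeG β (S ω) * X i ω ∂μ)
              = ∫ ω, ((fun ω => vbeG β (S ω)) * X i) ω ∂μ from rfl]
          rw [this, hmean i, mul_zero]
        have hptwise : ∀ ω, |X i ω + S ω| ^ β
            ≤ |S ω| ^ β + vbeG β (S ω) * X i ω + 6 * |X i ω| ^ β := by
          intro ω
          have := vbe_pointwise β hβ1 hβ2 (S ω) (X i ω)
          rw [add_comm (X i ω) (S ω)]
          simpa [vbeG] using this
        have hlhs_int : Integrable (fun ω => |X i ω + S ω| ^ β) μ :=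
          vbe_int_add β hβ1 hβ2 (hmeas i) (hSm s) (hintβ i) (hSint s)
        have hrhs_int : Integrable
            (fun ω => |S ω| ^ β + vbeG β (S ω) * X i ω + 6 * |X i ω| ^ β) μ :=
          ((hSint s).add hmul_int).add ((hintβ i).const_mul 6)
        have step1 : (∫ ω, |X i ω + S ω| ^ β ∂μ)
            ≤ ∫ ω, (|S ω| ^ β + vbeG β (S ω) * X i ω + 6 * |X i ω| ^ β) ∂μ :=
          integral_mono hlhs_int hrhs_int hptwise
        have step2 : (∫ ω, (|S ω| ^ β + vbeG β (S ω) * X i ω + 6 * |X i ω| ^ β) ∂μ)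
            = (∫ ω, |S ω| ^ β ∂μ) + (∫ ω, vbeG β (S ω) * X i ω ∂μ)
              + 6 * ∫ ω, |X i ω| ^ β ∂μ := by
          rw [integral_add (f := fun ω => |S ω| ^ β + vbeG β (S ω) * X i ω)
              (g := fun ω => 6 * |X i ω| ^ β) ((hSint s).add hmul_int)
              ((hintβ i).const_mul 6),
            integral_add (f := fun ω => |S ω| ^ β) (g := fun ω => vbeG β (S ω) * X i ω)
              (hSint s) hmul_int, integral_const_mul]
        simp only [Finset.sum_insert hi, Pi.add_apply]
        calc (∫ ω, |X i ω + S ω| ^ β ∂μ)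
            ≤ (∫ ω, |S ω| ^ β ∂μ) + 0 + 6 * ∫ ω, |X i ω| ^ β ∂μ := by
              rw [← hzero]; exact le_of_le_of_eq step1 step2
          _ ≤ 6 * ∑ j ∈ s, (∫ ω, |X j ω| ^ β ∂μ) + 0 + 6 * ∫ ω, |X i ω| ^ β ∂μ := by
              linarith [ih]
          _ = 6 * ((∫ ω, |X i ω| ^ β ∂μ) + ∑ j ∈ s, ∫ ω, |X j ω| ^ β ∂μ) := by ring
  have := main Finset.univ
  simpa using this
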